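/- Let p = λ(1-φ)ω and q = φω with λ, ω > 0 and φ ∈ (0,1], and suppose φ - λ(1-φ) > 0 (equivalently q > p). Define x* = (1 - e^{p-q})/(1 - e^{-q}). Then x* > 0 and x* is a fixed point of the Poincaré map S̄(x0) = u(q, e^{-p} x0), where u(t, y) = y/(y + (1-y)e^{-t}) is the logistic flow. That is, e^{-p} x* / (e^{-p} x* + (1 - e^{-p} x*) e^{-q}) = x*. -/
import Mathlib


/-- `x* = (1 - e^{p-q})/(1 - e^{-q})` is a positive fixed point of the
one-dimensional seasonal logistic Poincaré map `S̄(x0) = u(q, e^{-p} x0)`. -/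
theorem stmt_1 (lam ω φ : ℝ) (hlam : 0 < lam) (hω : 0 < ω)
    (hφ : φ ∈ Set.Ioc (0 : ℝ) 1) (hpos : 0 < φ - lam * (1 - φ))
    (p q xs : ℝ) (hp : p = lam * (1 - φ) * ω) (hq : q = φ * ω)
    (hxs : xs = (1 - Real.exp (p - q)) / (1 - Real.exp (-q))) :
    0 < xs ∧
    Real.exp (-p) * xs /
      (Real.exp (-p) * xs + (1 - Real.exp (-p) * xs) * Real.exp (-q)) = xs := by
  obtain ⟨hφ0, hφ1⟩ := hφ
  have hq0 : 0 < q := by rw [hq]; positivity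
  have hqp : p < q := by
    have : 0 < (φ - lam * (1 - φ)) * ω := mul_pos hpos hω
    rw [hp, hq]; nlinarith
  have hb : Real.exp (-q) < 1 := by
    rw [Real.exp_lt_one_iff]; linarith
  have hc : Real.exp (p - q) < 1 := by
    rw [Real.exp_lt_one_iff]; linarith
  have hb1 : (1 : ℝ) - Real.exp (-q) ≠ 0 := by linarith
  have hxpos : 0 < xs := by
    rw [hxs]; exact div_pos (by linarith) (by linarith)
  have hac : Real.exp (-p) * Real.exp (p - q) = Real.exp (-q) := by
    rw [← Real.exp_add]; ring_nf
  have hD : Real.exp (-p) * xs + (1 - Real.exp (-p) * xs) * Real.exp (-q)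
      = Real.exp (-p) := by
    rw [hxs]
    field_simp
    linear_combination (Real.exp (-q) - 1) * hac
  refine ⟨hxpos, ?_⟩
  rw [hD]; exact mul_div_cancel_left₀ xs (Real.exp_ne_zero _)
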